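/- Let 𝒮 be a triangulated category with a bounded t-structure (𝒮^{≤0}, 𝒮^{≥0}) whose heart ℋ := 𝒮^{≤0} ∩ 𝒮^{≥0} is algebraic in the following sense: there are objects S_1, …, S_k ∈ ℋ such that every object of ℋ lies in coprod_m({S_1, …, S_k}) for some m (every object of the heart is a finite iterated extension of finite direct sums of the S_i; this holds when ℋ is a length category with exactly the simple objects S_1, …, S_k up to isomorphism). Let G := S_1 ⊕ ⋯ ⊕ S_k. Then G is a classical generator of 𝒮 and fd(𝒮, G) = 0; in fact G(-∞,-1]^⊥ = ⟨G⟩^{[0,∞)} = 𝒮^{≥0}. -/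

import Mathlib

open CategoryTheory Limits Pretriangulated

universe v u

namespace Paper

variable (C : Type u) [Category.{v} C] [HasZeroObject C] [HasShift C ℤ]
  [Preadditive C] [∀ n : ℤ, (shiftFunctor C n).Additive] [Pretriangulated C]

/-- `Z` is a direct sum of `X` and `Y`. -/
def IsDirSum {C : Type u} [Category.{v} C] [Preadditive C] (Z X Y : C) : Prop :=
  ∃ (i₁ : X ⟶ Z) (i₂ : Y ⟶ Z) (p₁ : Z ⟶ X) (p₂ : Z ⟶ Y),
    i₁ ≫ p₁ = 𝟙 X ∧ i₂ ≫ p₂ = 𝟙 Y ∧ i₁ ≫ p₂ = 0 ∧ i₂ ≫ p₁ = 0 ∧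
    p₁ ≫ i₁ + p₂ ≫ i₂ = 𝟙 Z

/-- The extension `A * B` of two classes of objects. -/
def star (A B : Set C) : Set C :=
  {Z | ∃ (X Y : C) (f : X ⟶ Z) (g : Z ⟶ Y) (h : Y ⟶ (X⟦(1:ℤ)⟧ : C)),
      X ∈ A ∧ Y ∈ B ∧ Triangle.mk f g h ∈ distTriang C}

/-- Closure of a class of objects under finite direct sums and isomorphism. -/
inductive addClos (A : Set C) : C → Prop
  | of {X Y : C} (e : X ≅ Y) (hY : Y ∈ A) : addClos A X
  | zero {X : C} (hX : IsZero X) : addClos A X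
  | dirSum {Z X Y : C} (hX : addClos A X) (hY : addClos A Y) (h : IsDirSum Z X Y) :
      addClos A Z

/-- `coprodN A n` is `coprod_n (A)`; by convention `coprodN A 0` consists of zero objects. -/
def coprodN (A : Set C) : ℕ → Set C
  | 0 => {X | IsZero X}
  | 1 => setOf (addClos C A)
  | (n+2) => star C (setOf (addClos C A)) (coprodN A (n+1))

/-- Direct summands of objects in `A`. -/
def smd (A : Set C) : Set C := {X | ∃ (Z Y : C), Z ∈ A ∧ IsDirSum Z X Y}

/-- The class `G[I] = {G[-i] : i ∈ I}` (up to isomorphism). -/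
def shiftsOf (G : C) (I : Set ℤ) : Set C :=
  {X | ∃ i ∈ I, Nonempty (X ≅ (G⟦(-i : ℤ)⟧ : C))}

/-- `⟨G⟩ₙ^I := smd (coprodₙ (G[I]))`. -/
def genN (G : C) (I : Set ℤ) (n : ℕ) : Set C := smd C (coprodN C (shiftsOf C G I) n)

/-- `⟨G⟩^I := ⋃_{n > 0} ⟨G⟩ₙ^I`. -/
def gen (G : C) (I : Set ℤ) : Set C := {X | ∃ n : ℕ, X ∈ genN C G I (n+1)}

/-- The right orthogonal `G[I]^⊥`. -/
def rPerpShifts (G : C) (I : Set ℤ) : Set C :=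
  {Y | ∀ i ∈ I, ∀ f : (G⟦(-i : ℤ)⟧ : C) ⟶ Y, f = 0}

/-- `fd(𝒮, G) ≤ m` : `G(-∞,-1]^⊥ ⊆ ⟨G⟩^{[0,∞)}[m] = ⟨G⟩^{[-m,∞)}`. -/
def fdLE (G : C) (m : ℤ) : Prop :=
  ∀ X ∈ rPerpShifts C G (Set.Iic (-1)), X ∈ gen C G (Set.Ici (-m))

/-- `fd(𝒮ᵒᵖ, Gᵒᵖ) ≤ m`, expressed inside `𝒮`. -/
def fdOpLE (G : C) (m : ℤ) : Prop :=
  ∀ X : C, (∀ j : ℤ, j ≤ -1 → ∀ f : X ⟶ (G⟦j⟧ : C), f = 0) →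
    X ∈ gen C G (Set.Iic m)

/-- A t-structure on `C`, given by its aisle `le = 𝒮^{≤0}` and coaisle `ge = 𝒮^{≥0}`. -/
structure TStructure where
  le : Set C
  ge : Set C
  le_iso : ∀ ⦃X Y : C⦄, (X ≅ Y) → X ∈ le → Y ∈ le
  ge_iso : ∀ ⦃X Y : C⦄, (X ≅ Y) → X ∈ ge → Y ∈ ge
  le_shift : ∀ X ∈ le, (X⟦(1:ℤ)⟧ : C) ∈ le
  ge_shift : ∀ X ∈ ge, (X⟦(-1:ℤ)⟧ : C) ∈ ge
  hom_zero : ∀ X ∈ le, ∀ Y ∈ ge, ∀ f : (X⟦(1:ℤ)⟧ : C) ⟶ Y, f = 0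
  triangle : ∀ X : C, ∃ (A B : C) (_ : A ∈ le) (_ : B ∈ ge)
      (f : ((A⟦(1:ℤ)⟧ : C)) ⟶ X) (g : X ⟶ B) (h : B ⟶ ((A⟦(1:ℤ)⟧ : C)⟦(1:ℤ)⟧)),
      Triangle.mk f g h ∈ distTriang C

variable {C}

/-- bounded above: `𝒮 = ⋃ₙ 𝒮^{≤n}`. -/
def TStructure.BoundedAbove (T : TStructure C) : Prop :=
  ∀ X : C, ∃ n : ℕ, (X⟦(n : ℤ)⟧ : C) ∈ T.le

/-- bounded below: `𝒮 = ⋃ₙ 𝒮^{≥-n}`. -/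
def TStructure.BoundedBelow (T : TStructure C) : Prop :=
  ∀ X : C, ∃ n : ℕ, (X⟦(-(n : ℤ))⟧ : C) ∈ T.ge

/-- bounded t-structure. -/
def TStructure.Bounded (T : TStructure C) : Prop :=
  T.BoundedAbove ∧ T.BoundedBelow

/-- A good metric on `C`. -/
structure IsGoodMetric (M : ℕ → Set C) : Prop where
  zero_mem : ∀ n : ℕ, ∀ X : C, IsZero X → X ∈ M n
  ext : ∀ n : ℕ, star C (M n) (M n) ⊆ M n
  shift_neg : ∀ n : ℕ, ∀ X ∈ M (n+1), (X⟦(-1:ℤ)⟧ : C) ∈ M n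
  mono : ∀ n : ℕ, ∀ X ∈ M (n+1), X ∈ M n
  shift_pos : ∀ n : ℕ, ∀ X ∈ M (n+1), (X⟦(1:ℤ)⟧ : C) ∈ M n

variable (C)

/-- A chain of morphisms indexed by `ℕ`. -/
structure Chain where
  X : ℕ → C
  f : ∀ n : ℕ, X n ⟶ X (n+1)

/-- `Z` is a cone of `f : A ⟶ B`. -/
def IsConeOf {A B : C} (Z : C) (f : A ⟶ B) : Prop :=
  ∃ (g : B ⟶ Z) (h : Z ⟶ (A⟦(1:ℤ)⟧ : C)), Triangle.mk f g h ∈ distTriang C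

variable {C}

/-- Cauchy sequence with respect to a (good) metric `M`. -/
def Chain.IsCauchy (c : Chain C) (M : ℕ → Set C) : Prop :=
  ∀ i : ℕ, ∃ N : ℕ, ∀ j : ℕ, N ≤ j → ∃ Z : C, IsConeOf C Z (c.f j) ∧ Z ∈ M i


/-- `G` is a finite direct sum of the family `S`. -/
def IsFiniteDirSum {C : Type u} [Category.{v} C] [Preadditive C]
    {k : ℕ} (G : C) (S : Fin k → C) : Prop :=
  ∃ (ι : ∀ i, S i ⟶ G) (π : ∀ i, G ⟶ S i),
    (∀ i, ι i ≫ π i = 𝟙 (S i)) ∧ (∀ i j, i ≠ j → ι i ≫ π j = 0) ∧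
    (∑ i, π i ≫ ι i) = 𝟙 G

set_option linter.unusedSectionVars false

section ToolsA

variable {C : Type u} [Category.{v} C] [HasZeroObject C] [HasShift C ℤ]
  [Preadditive C] [∀ n : ℤ, (shiftFunctor C n).Additive] [Pretriangulated C]

/-! ### Shift utilities -/

noncomputable def shAdd (X : C) (a b c : ℤ) (h : a + b = c) : ((X⟦a⟧)⟦b⟧ : C) ≅ X⟦c⟧ :=
  ((shiftFunctorAdd' C a b c h).app X).symm

noncomputable def shCancel (X : C) (a : ℤ) : ((X⟦a⟧)⟦-a⟧ : C) ≅ X :=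
  (shiftFunctorCompIsoId C a (-a) (add_neg_cancel a)).app X

noncomputable def shZero (X : C) : (X⟦(0:ℤ)⟧ : C) ≅ X := (shiftFunctorZero C ℤ).app X

lemma shift_map_eq_zero_iff {X Y : C} (a : ℤ) {φ : X ⟶ Y} :
    (shiftFunctor C a).map φ = 0 ↔ φ = 0 := Functor.map_eq_zero_iff _

/-- Turn a hom `X⟦a⟧ ⟶ Y` into a hom `X ⟶ Y⟦-a⟧`. -/
noncomputable def unshiftSrc {X Y : C} (a : ℤ) (φ : (X⟦a⟧ : C) ⟶ Y) : X ⟶ (Y⟦-a⟧ : C) :=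
  (shCancel X a).inv ≫ (shiftFunctor C (-a)).map φ

lemma unshiftSrc_eq_zero_iff {X Y : C} (a : ℤ) (φ : (X⟦a⟧ : C) ⟶ Y) :
    unshiftSrc a φ = 0 ↔ φ = 0 := by
  unfold unshiftSrc
  rw [← shift_map_eq_zero_iff (-a) (φ := φ)]
  constructor
  · intro h
    have := (shCancel X a).hom ≫= h
    simpa using this
  · intro h; rw [h, comp_zero]

/-- Turn a hom `X ⟶ Y⟦a⟧` into a hom `X⟦-a⟧ ⟶ Y`. -/
noncomputable def unshiftTgt {X Y : C} (a : ℤ) (φ : X ⟶ (Y⟦a⟧ : C)) : (X⟦-a⟧ : C) ⟶ Y :=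
  (shiftFunctor C (-a)).map φ ≫ (shCancel Y a).hom

lemma unshiftTgt_eq_zero_iff {X Y : C} (a : ℤ) (φ : X ⟶ (Y⟦a⟧ : C)) :
    unshiftTgt a φ = 0 ↔ φ = 0 := by
  unfold unshiftTgt
  rw [← shift_map_eq_zero_iff (-a) (φ := φ)]
  constructor
  · intro h
    have := h =≫ (shCancel Y a).inv
    simpa using this
  · intro h; rw [h, zero_comp]

/-- Reshaping a distinguished triangle along isomorphisms of its objects. -/
lemma reshape {T' : Triangle C} (hT : T' ∈ distTriang C) {X Y Z : C}
    (e₁ : X ≅ T'.obj₁) (e₂ : Y ≅ T'.obj₂) (e₃ : Z ≅ T'.obj₃) :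
    Triangle.mk (e₁.hom ≫ T'.mor₁ ≫ e₂.inv) (e₂.hom ≫ T'.mor₂ ≫ e₃.inv)
      (e₃.hom ≫ T'.mor₃ ≫ (shiftFunctor C (1:ℤ)).map e₁.inv) ∈ distTriang C := by
  refine isomorphic_distinguished _ hT _ (Triangle.isoMk _ _ e₁ e₂ e₃ ?_ ?_ ?_)
  · simp [Triangle.mk]
  · simp [Triangle.mk]
  · simp [Triangle.mk, ← Functor.map_comp]

/-! ### IsDirSum utilities -/

lemma IsDirSum.biprod (X Y : C) : IsDirSum (X ⊞ Y) X Y :=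
  ⟨biprod.inl, biprod.inr, biprod.fst, biprod.snd, by simp, by simp, by simp, by simp,
    biprod.total⟩

lemma IsDirSum.of_iso {Z Z' X Y : C} (e : Z' ≅ Z) (h : IsDirSum Z X Y) : IsDirSum Z' X Y := by
  obtain ⟨i₁, i₂, p₁, p₂, h₁, h₂, h₃, h₄, h₅⟩ := h
  refine ⟨i₁ ≫ e.inv, i₂ ≫ e.inv, e.hom ≫ p₁, e.hom ≫ p₂, ?_, ?_, ?_, ?_, ?_⟩
  · simp [h₁]
  · simp [h₂]
  · simp [h₃]
  · simp [h₄]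
  · have : e.hom ≫ (p₁ ≫ i₁ + p₂ ≫ i₂) ≫ e.inv = 𝟙 Z' := by rw [h₅]; simp
    rw [← this]
    simp [Preadditive.comp_add, Preadditive.add_comp]

lemma IsDirSum.congr₁ {Z X X' Y : C} (e : X' ≅ X) (h : IsDirSum Z X Y) : IsDirSum Z X' Y := by
  obtain ⟨i₁, i₂, p₁, p₂, h₁, h₂, h₃, h₄, h₅⟩ := h
  refine ⟨e.hom ≫ i₁, i₂, p₁ ≫ e.inv, p₂, ?_, h₂, ?_, ?_, ?_⟩
  · simp [reassoc_of% h₁]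
  · simp [h₃]
  · simp [reassoc_of% h₄]
  · rw [Category.assoc, Iso.inv_hom_id_assoc]
    exact h₅
  
lemma IsDirSum.comm {Z X Y : C} (h : IsDirSum Z X Y) : IsDirSum Z Y X := by
  obtain ⟨i₁, i₂, p₁, p₂, h₁, h₂, h₃, h₄, h₅⟩ := h
  exact ⟨i₂, i₁, p₂, p₁, h₂, h₁, h₄, h₃, by rw [add_comm]; exact h₅⟩

lemma IsDirSum.zero_right {X N : C} (hN : IsZero N) : IsDirSum X X N :=
  ⟨𝟙 X, 0, 𝟙 X, 0, by simp, by simp [hN.eq_of_src (𝟙 N) 0], by simp, by simp, by simp⟩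

lemma IsDirSum.shift {Z X Y : C} (s : ℤ) (h : IsDirSum Z X Y) :
    IsDirSum (Z⟦s⟧ : C) (X⟦s⟧ : C) (Y⟦s⟧ : C) := by
  obtain ⟨i₁, i₂, p₁, p₂, h₁, h₂, h₃, h₄, h₅⟩ := h
  refine ⟨(shiftFunctor C s).map i₁, (shiftFunctor C s).map i₂, (shiftFunctor C s).map p₁,
    (shiftFunctor C s).map p₂, ?_, ?_, ?_, ?_, ?_⟩
  · rw [← Functor.map_comp, h₁, CategoryTheory.Functor.map_id]
  · rw [← Functor.map_comp, h₂, CategoryTheory.Functor.map_id]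
  · rw [← Functor.map_comp, h₃, CategoryTheory.Functor.map_zero]
  · rw [← Functor.map_comp, h₄, CategoryTheory.Functor.map_zero]
  · rw [← Functor.map_comp, ← Functor.map_comp, ← CategoryTheory.Functor.map_add, h₅, CategoryTheory.Functor.map_id]

/-- Splitting off a direct summand from a split monomorphism. -/
lemma exists_isDirSum_of_split {X Z : C} (ι : X ⟶ Z) (π : Z ⟶ X) (hh : ι ≫ π = 𝟙 X) :
    ∃ Y, IsDirSum Z X Y := by
  obtain ⟨Q, gq, hq, hTq⟩ := distinguished_cocone_triangle ι
  have : IsSplitMono ι := IsSplitMono.mk' ⟨π, hh⟩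
  have h0 : (Triangle.mk ι gq hq).mor₃ = 0 :=
    Triangle.mor₃_eq_zero_of_mono₁ _ hTq (by dsimp [Triangle.mk]; infer_instance)
  obtain ⟨e, he₁, he₂⟩ := exists_iso_binaryBiproduct_of_distTriang _ hTq h0
  exact ⟨Q, (IsDirSum.biprod X Q).of_iso e⟩

end ToolsA
section ToolsB
open ZeroObject

variable {C : Type u} [Category.{v} C] [HasZeroObject C] [HasShift C ℤ]
  [Preadditive C] [∀ n : ℤ, (shiftFunctor C n).Additive] [Pretriangulated C]

/-! ### Closure properties of the classes -/

lemma addClos_iso {A : Set C} {X Y : C} (e : X ≅ Y) (h : addClos C A Y) : addClos C A X := by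
  cases h with
  | of e' hY => exact .of (e ≪≫ e') hY
  | zero hX => exact .zero (hX.of_iso e)
  | dirSum hX hY hsum => exact .dirSum hX hY (hsum.of_iso e)

lemma addClos_mono {A B : Set C} (hAB : A ⊆ B) {X : C} (h : addClos C A X) :
    addClos C B X := by
  induction h with
  | of e hY => exact .of e (hAB hY)
  | zero hX => exact .zero hX
  | dirSum _ _ hsum ihX ihY => exact .dirSum ihX ihY hsum

lemma star_iso {A B : Set C} {Z Z' : C} (e : Z' ≅ Z) (h : Z ∈ star C A B) :
    Z' ∈ star C A B := by
  obtain ⟨X, Y, f, g, h3, hX, hY, hT⟩ := h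
  refine ⟨X, Y, f ≫ e.inv, e.hom ≫ g, h3, hX, hY, ?_⟩
  refine isomorphic_distinguished _ hT _
    (Triangle.isoMk _ _ (Iso.refl X) e (Iso.refl Y) ?_ ?_ ?_) <;> simp [Triangle.mk]

lemma star_mono {A A' B B' : Set C} (hA : A ⊆ A') (hB : B ⊆ B') :
    star C A B ⊆ star C A' B' := by
  rintro Z ⟨X, Y, f, g, h3, hX, hY, hT⟩
  exact ⟨X, Y, f, g, h3, hA hX, hB hY, hT⟩

lemma coprodN_iso {A : Set C} {X Y : C} (e : X ≅ Y) :
    ∀ {n : ℕ}, Y ∈ coprodN C A n → X ∈ coprodN C A n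
  | 0, h => h.of_iso e
  | 1, h => addClos_iso e h
  | (n+2), h => star_iso e h

lemma coprodN_mono {A B : Set C} (hAB : A ⊆ B) :
    ∀ n : ℕ, coprodN C A n ⊆ coprodN C B n
  | 0 => le_refl _
  | 1 => fun X h => addClos_mono hAB h
  | (n+2) => star_mono (fun X h => addClos_mono hAB h) (coprodN_mono hAB (n+1))

lemma zero_mem_coprodN {A : Set C} {X : C} (hX : IsZero X) :
    ∀ n : ℕ, X ∈ coprodN C A n
  | 0 => hX
  | 1 => .zero hX
  | (n+2) => ⟨X, (0 : C), 𝟙 X, 0, 0, .zero hX,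
      zero_mem_coprodN (isZero_zero C) (n+1), contractible_distinguished X⟩

lemma mem_smd_self {A : Set C} {X : C} (h : X ∈ A) : X ∈ smd C A :=
  ⟨X, 0, h, .zero_right (isZero_zero C)⟩

lemma smd_iso {A : Set C} {X Y : C} (e : X ≅ Y) (h : Y ∈ smd C A) : X ∈ smd C A := by
  obtain ⟨Z, W, hZ, hsum⟩ := h
  exact ⟨Z, W, hZ, hsum.congr₁ e⟩

lemma smd_mono {A B : Set C} (hAB : A ⊆ B) : smd C A ⊆ smd C B := by
  rintro X ⟨Z, W, hZ, hsum⟩; exact ⟨Z, W, hAB hZ, hsum⟩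

lemma genN_iso {G : C} {I : Set ℤ} {n : ℕ} {X Y : C} (e : X ≅ Y) (h : Y ∈ genN C G I n) :
    X ∈ genN C G I n := smd_iso e h

lemma gen_iso {G : C} {I : Set ℤ} {X Y : C} (e : X ≅ Y) (h : Y ∈ gen C G I) :
    X ∈ gen C G I := by obtain ⟨n, hn⟩ := h; exact ⟨n, genN_iso e hn⟩

lemma gen_mono_I {G : C} {I I' : Set ℤ} (h : I ⊆ I') : gen C G I ⊆ gen C G I' := by
  rintro X ⟨n, hn⟩
  refine ⟨n, smd_mono (coprodN_mono ?_ _) hn⟩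
  rintro Z ⟨i, hi, he⟩; exact ⟨i, h hi, he⟩

lemma zero_mem_gen {G : C} {I : Set ℤ} {X : C} (hX : IsZero X) : X ∈ gen C G I :=
  ⟨0, mem_smd_self (by exact .zero hX)⟩

/-! ### Shifting the classes -/

lemma isZero_shift_of_isZero {X : C} (hX : IsZero X) (s : ℤ) : IsZero ((X⟦s⟧ : C)) := by
  rw [IsZero.iff_id_eq_zero] at hX ⊢
  rw [← CategoryTheory.Functor.map_id, hX, CategoryTheory.Functor.map_zero]

lemma addClos_shift {A B : Set C} (s : ℤ) (hAB : ∀ X ∈ A, (X⟦s⟧ : C) ∈ B) {X : C}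
    (h : addClos C A X) : addClos C B ((X⟦s⟧ : C)) := by
  induction h with
  | of e hY => exact .of ((shiftFunctor C s).mapIso e) (hAB _ hY)
  | zero hX => exact .zero (isZero_shift_of_isZero hX s)
  | dirSum _ _ hsum ihX ihY => exact .dirSum ihX ihY (hsum.shift s)

lemma coprodN_shift {A B : Set C} (s : ℤ) (hAB : ∀ X ∈ A, (X⟦s⟧ : C) ∈ B) :
    ∀ (n : ℕ) (X : C), X ∈ coprodN C A n → (X⟦s⟧ : C) ∈ coprodN C B n
  | 0, X, h => isZero_shift_of_isZero h s
  | 1, X, h => addClos_shift s hAB h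
  | (n+2), X, h => by
      obtain ⟨U, V, f, g, h3, hU, hV, hT⟩ := h
      have hT' := Pretriangulated.Triangle.shift_distinguished _ hT s
      exact ⟨U⟦s⟧, V⟦s⟧, _, _, _, addClos_shift s hAB hU,
        coprodN_shift s hAB (n+1) V hV, hT'⟩

lemma genN_shift {G : C} {I I' : Set ℤ} (s : ℤ) (hII' : ∀ i ∈ I, i - s ∈ I') {n : ℕ} {X : C}
    (h : X ∈ genN C G I n) : (X⟦s⟧ : C) ∈ genN C G I' n := by
  obtain ⟨Z, W, hZ, hsum⟩ := h
  refine ⟨Z⟦s⟧, W⟦s⟧, coprodN_shift s ?_ n Z hZ, hsum.shift s⟩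
  rintro U ⟨i, hi, ⟨e⟩⟩
  exact ⟨i - s, hII' i hi, ⟨(shiftFunctor C s).mapIso e ≪≫ shAdd G (-i) s (-(i-s)) (by ring)⟩⟩

lemma gen_shift {G : C} {I I' : Set ℤ} (s : ℤ) (hII' : ∀ i ∈ I, i - s ∈ I') {X : C}
    (h : X ∈ gen C G I) : (X⟦s⟧ : C) ∈ gen C G I' := by
  obtain ⟨n, hn⟩ := h; exact ⟨n, genN_shift s hII' hn⟩

/-! ### Vanishing lemmas -/

lemma vanish_out_addClos {A : Set C} {Y X : C} (hA : ∀ X' ∈ A, ∀ φ : X' ⟶ Y, φ = 0)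
    (h : addClos C A X) : ∀ φ : X ⟶ Y, φ = 0 := by
  induction h with
  | of e hY' =>
      intro φ
      have h0 : e.inv ≫ φ = 0 := hA _ hY' _
      rw [← Iso.hom_inv_id_assoc e φ, h0, comp_zero]
  | zero hX => intro φ; exact hX.eq_of_src φ 0
  | dirSum _ _ hsum ihX ihY =>
      intro φ
      obtain ⟨i₁, i₂, p₁, p₂, _, _, _, _, k₅⟩ := hsum
      rw [← Category.id_comp φ, ← k₅, Preadditive.add_comp, Category.assoc, Category.assoc]
      simp [ihX (i₁ ≫ φ), ihY (i₂ ≫ φ)]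

lemma vanish_out_coprodN {A : Set C} {Y : C} (hA : ∀ X' ∈ A, ∀ φ : X' ⟶ Y, φ = 0) :
    ∀ (n : ℕ) (X : C), X ∈ coprodN C A n → ∀ φ : X ⟶ Y, φ = 0
  | 0, X, h => fun φ => h.eq_of_src φ 0
  | 1, X, h => vanish_out_addClos hA h
  | (n+2), X, h => by
      obtain ⟨U, V, f, g, h3, hU, hV, hT⟩ := h
      intro φ
      obtain ⟨ψ, hψ⟩ := Triangle.yoneda_exact₂ _ hT φ (vanish_out_addClos hA hU _)
      rw [hψ, show ψ = 0 from vanish_out_coprodN hA (n+1) V hV ψ]; exact comp_zero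

lemma vanish_out_genN {G : C} {I : Set ℤ} {Y : C}
    (hGI : ∀ i ∈ I, ∀ φ : (G⟦(-i:ℤ)⟧ : C) ⟶ Y, φ = 0) {n : ℕ} {X : C}
    (h : X ∈ genN C G I n) : ∀ φ : X ⟶ Y, φ = 0 := by
  obtain ⟨Z, W, hZ, hsum⟩ := h
  obtain ⟨i₁, i₂, p₁, p₂, k₁, _, _, _, _⟩ := hsum
  intro φ
  have hZ0 : ∀ ψ : Z ⟶ Y, ψ = 0 := by
    refine vanish_out_coprodN ?_ n Z hZ
    rintro X' ⟨i, hi, ⟨e⟩⟩ φ'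
    have h0 : e.inv ≫ φ' = 0 := hGI i hi _
    rw [← Iso.hom_inv_id_assoc e φ', h0, comp_zero]
  rw [← Category.id_comp φ, ← k₁, Category.assoc, hZ0 (p₁ ≫ φ), comp_zero]

lemma vanish_in_addClos {A : Set C} {W X : C} (hA : ∀ X' ∈ A, ∀ φ : W ⟶ X', φ = 0)
    (h : addClos C A X) : ∀ φ : W ⟶ X, φ = 0 := by
  induction h with
  | of e hY' =>
      intro φ
      have h0 : φ ≫ e.hom = 0 := hA _ hY' _
      rw [← Category.comp_id φ, ← e.hom_inv_id, ← Category.assoc, h0, zero_comp]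
  | zero hX => intro φ; exact hX.eq_of_tgt φ 0
  | dirSum _ _ hsum ihX ihY =>
      intro φ
      obtain ⟨i₁, i₂, p₁, p₂, _, _, _, _, k₅⟩ := hsum
      rw [← Category.comp_id φ, ← k₅, Preadditive.comp_add, ← Category.assoc, ← Category.assoc]
      simp [ihX (φ ≫ p₁), ihY (φ ≫ p₂)]

lemma vanish_in_coprodN {A : Set C} {W : C} (hA : ∀ X' ∈ A, ∀ φ : W ⟶ X', φ = 0) :
    ∀ (n : ℕ) (X : C), X ∈ coprodN C A n → ∀ φ : W ⟶ X, φ = 0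
  | 0, X, h => fun φ => h.eq_of_tgt φ 0
  | 1, X, h => vanish_in_addClos hA h
  | (n+2), X, h => by
      obtain ⟨U, V, f, g, h3, hU, hV, hT⟩ := h
      intro φ
      obtain ⟨ψ, hψ⟩ := Triangle.coyoneda_exact₂ _ hT φ (vanish_in_coprodN hA (n+1) V hV _)
      rw [hψ, show ψ = 0 from vanish_in_addClos hA hU ψ]; exact zero_comp

lemma vanish_in_genN {G : C} {I : Set ℤ} {W : C}
    (hGI : ∀ i ∈ I, ∀ φ : W ⟶ (G⟦(-i:ℤ)⟧ : C), φ = 0) {n : ℕ} {X : C}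
    (h : X ∈ genN C G I n) : ∀ φ : W ⟶ X, φ = 0 := by
  obtain ⟨Z, W', hZ, hsum⟩ := h
  obtain ⟨i₁, i₂, p₁, p₂, k₁, _, _, _, _⟩ := hsum
  intro φ
  have hZ0 : ∀ ψ : W ⟶ Z, ψ = 0 := by
    refine vanish_in_coprodN ?_ n Z hZ
    rintro X' ⟨i, hi, ⟨e⟩⟩ φ'
    have h0 : φ' ≫ e.hom = 0 := hGI i hi _
    rw [← Category.comp_id φ', ← e.hom_inv_id, ← Category.assoc, h0, zero_comp]
  rw [← Category.comp_id φ, ← k₁, ← Category.assoc, hZ0 (φ ≫ i₁), zero_comp]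

end ToolsB
section ToolsC
open ZeroObject

variable {C : Type u} [Category.{v} C] [HasZeroObject C] [HasShift C ℤ]
  [Preadditive C] [∀ n : ℤ, (shiftFunctor C n).Additive] [Pretriangulated C]

/-- Every object of `addClos {S i}` has a complement inside an object of
`addClos (shiftsOf G I)`, provided `0 ∈ I` and `G` is the direct sum of the `S i`. -/
lemma compl_in_addClos {G : C} {I : Set ℤ} (h0 : (0:ℤ) ∈ I) {k : ℕ} {S : Fin k → C}
    (hG : IsFiniteDirSum G S) {X : C} (h : addClos C {Y | ∃ i, Y = S i} X) :
    ∃ X' Z, addClos C (shiftsOf C G I) Z ∧ IsDirSum Z X X' := by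
  have hGmem : G ∈ shiftsOf C G I := by
    refine ⟨0, h0, ⟨?_⟩⟩
    have : ((0:ℤ)) = -0 := by norm_num
    rw [← this]
    exact (shZero G).symm
  induction h with
  | of e hY =>
      obtain ⟨i, rfl⟩ := hY
      obtain ⟨ι, π, hιπ, _, _⟩ := hG
      obtain ⟨Q, hQ⟩ := exists_isDirSum_of_split (ι i) (π i) (hιπ i)
      exact ⟨Q, G, .of (Iso.refl G) hGmem, hQ.congr₁ e⟩
  | zero hX => exact ⟨_, _, .zero hX, .zero_right hX⟩
  | dirSum hX hY hsum ihX ihY =>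
      obtain ⟨X₁', Z₁, hZ₁, hd₁⟩ := ihX
      obtain ⟨X₂', Z₂, hZ₂, hd₂⟩ := ihY
      obtain ⟨a₁, a₂, b₁, b₂, k₁, k₂, k₃, k₄, k₅⟩ := hsum
      obtain ⟨c₁, c₁', d₁, d₁', m₁, -, -, -, -⟩ := hd₁
      obtain ⟨c₂, c₂', d₂, d₂', m₂, -, -, -, -⟩ := hd₂
      have hsplit : (biprod.lift (b₁ ≫ c₁) (b₂ ≫ c₂)) ≫
          (biprod.desc (d₁ ≫ a₁) (d₂ ≫ a₂)) = 𝟙 _ := by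
        rw [biprod.lift_desc, ← k₅]
        congr 1
        · rw [Category.assoc, ← Category.assoc c₁, m₁, Category.id_comp]
        · rw [Category.assoc, ← Category.assoc c₂, m₂, Category.id_comp]
      obtain ⟨Q, hQ⟩ := exists_isDirSum_of_split _ _ hsplit
      exact ⟨Q, Z₁ ⊞ Z₂, .dirSum hZ₁ hZ₂ (IsDirSum.biprod _ _), hQ⟩

/-- **Key absorption lemma**: if `V ⟶ Y ⟶ R` is a distinguished triangle with
`V ∈ addClos {S i}` and `R ∈ ⟨G⟩^I`, then `Y ∈ ⟨G⟩^I`. -/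
lemma absorb {G : C} {I : Set ℤ} (h0 : (0:ℤ) ∈ I) {k : ℕ} {S : Fin k → C}
    (hG : IsFiniteDirSum G S) {V Y R : C} {f : V ⟶ Y} {g : Y ⟶ R}
    {h3 : R ⟶ (V⟦(1:ℤ)⟧ : C)} (hTr : Triangle.mk f g h3 ∈ distTriang C)
    (hV : addClos C {Z | ∃ i, Z = S i} V) (hR : R ∈ gen C G I) : Y ∈ gen C G I := by
  obtain ⟨V'', Z₁, hZ₁, hdV⟩ := compl_in_addClos h0 hG hV
  obtain ⟨nR, ZR, WR, hZR, hdR⟩ := hR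
  set Ts : Fin 3 → Triangle C := fun j => match j with
    | 0 => Triangle.mk f g h3
    | 1 => contractibleTriangle V''
    | 2 => Triangle.mk (0 : (0:C) ⟶ WR) (𝟙 WR) 0 with hTsdef
  have hTs : ∀ j, Ts j ∈ distTriang C := by
    intro j
    match j with
    | 0 => exact hTr
    | 1 => exact contractible_distinguished V''
    | 2 => exact contractible_distinguished₁ WR
  have hPT := productTriangle_distinguished Ts hTs
  -- Y is a direct summand of the middle object
  have hsplitY : (Pi.lift (fun j => match j with
      | 0 => 𝟙 Y
      | 1 => (0 : Y ⟶ V'')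
      | 2 => (0 : Y ⟶ WR)) : Y ⟶ ∏ᶜ fun j => (Ts j).obj₂) ≫ Pi.π _ 0 = 𝟙 Y := by
    simp; rfl
  obtain ⟨Qm, hQm⟩ := exists_isDirSum_of_split _ _ hsplitY
  refine ⟨nR + 1, _, Qm, ?_, hQm⟩
  show _ ∈ star C _ (coprodN C (shiftsOf C G I) (nR+1))
  refine ⟨_, _, (productTriangle Ts).mor₁, (productTriangle Ts).mor₂,
    (productTriangle Ts).mor₃, ?_, ?_, hPT⟩
  · -- first object: iso to Z₁
    obtain ⟨i₁, i₂, p₁, p₂, m₁, m₂, m₃, m₄, m₅⟩ := hdV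
    refine addClos_iso (X := ∏ᶜ fun j => (Ts j).obj₁) (Iso.mk
      (Pi.π _ 0 ≫ i₁ + Pi.π _ 1 ≫ i₂)
      (Pi.lift (fun j => match j with
        | 0 => p₁
        | 1 => p₂
        | 2 => (0 : Z₁ ⟶ (Ts 2).obj₁))) ?_ ?_) hZ₁
    · apply Limits.Pi.hom_ext
      intro j
      match j with
      | 0 => simp [m₁, m₄]; erw [Category.assoc, Category.assoc, m₁, m₄, comp_zero, add_zero]; exact Category.comp_id _
      | 1 => simp [m₂, m₃]; erw [Category.assoc, Category.assoc, m₂, m₃, comp_zero, zero_add]; exact Category.comp_id _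
      | 2 => exact (isZero_zero C).eq_of_tgt _ _
    · rw [Preadditive.comp_add]; erw [← Category.assoc, ← Category.assoc, limit.lift_π, limit.lift_π]
      exact m₅
  · -- third object: iso to ZR
    obtain ⟨i₁, i₂, p₁, p₂, m₁, m₂, m₃, m₄, m₅⟩ := hdR
    refine coprodN_iso (Iso.mk
      (Pi.π _ 0 ≫ i₁ + Pi.π _ 2 ≫ i₂)
      (Pi.lift (fun j => match j with
        | 0 => p₁
        | 1 => (0 : ZR ⟶ (Ts 1).obj₃)
        | 2 => p₂)) ?_ ?_) hZR
    · apply Limits.Pi.hom_ext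
      intro j
      match j with
      | 0 => simp [m₁, m₄]; erw [Category.assoc, Category.assoc, m₁, m₄, comp_zero, add_zero]; exact Category.comp_id _
      | 1 => exact (isZero_zero C).eq_of_tgt _ _
      | 2 => simp [m₂, m₃]; erw [Category.assoc, Category.assoc, m₂, m₃, comp_zero, zero_add]; exact Category.comp_id _
    · rw [Preadditive.comp_add]; erw [← Category.assoc, ← Category.assoc, limit.lift_π, limit.lift_π]
      exact m₅

end ToolsC
section ToolsD
open ZeroObject

variable {C : Type u} [Category.{v} C] [HasZeroObject C] [HasShift C ℤ]
  [Preadditive C] [∀ n : ℤ, (shiftFunctor C n).Additive] [Pretriangulated C]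

namespace TStructure

variable (T : TStructure C)

/-- `X ∈ 𝒮^{≤n}`, characterized by Hom-vanishing. -/
def UB (X : C) (n : ℤ) : Prop :=
  ∀ Z ∈ T.ge, ∀ b : ℤ, n + b < 0 → ∀ φ : X ⟶ (Z⟦b⟧ : C), φ = 0

/-- `X ∈ 𝒮^{≥n}`, characterized by Hom-vanishing. -/
def LB (X : C) (n : ℤ) : Prop :=
  ∀ W ∈ T.le, ∀ b : ℤ, b < n → ∀ φ : W ⟶ (X⟦b⟧ : C), φ = 0

variable {T}

lemma UB.hom0 {X Z : C} {n : ℤ} (h : T.UB X n) (hZ : Z ∈ T.ge) (hn : n < 0)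
    (φ : X ⟶ Z) : φ = 0 := by
  have h1 := h Z hZ 0 (by omega) (φ ≫ (shZero Z).inv)
  calc φ = (φ ≫ (shZero Z).inv) ≫ (shZero Z).hom := by simp
  _ = 0 := by rw [h1, zero_comp]

lemma UB.homL {X Z : C} {n : ℤ} (h : T.UB X n) (hZ : Z ∈ T.ge) {a : ℤ} (ha : n < a)
    (φ : (X⟦a⟧ : C) ⟶ Z) : φ = 0 := by
  rw [← unshiftSrc_eq_zero_iff]
  exact h Z hZ (-a) (by omega) _

lemma UB.hom {X Z : C} {n : ℤ} (h : T.UB X n) (hZ : Z ∈ T.ge) {a b : ℤ} (hab : n + b < a)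
    (φ : (X⟦a⟧ : C) ⟶ (Z⟦b⟧ : C)) : φ = 0 := by
  rw [← unshiftSrc_eq_zero_iff]
  have h1 := h Z hZ (b - a) (by omega)
    (unshiftSrc a φ ≫ (shAdd Z b (-a) (b - a) (by ring)).hom)
  calc unshiftSrc a φ
      = (unshiftSrc a φ ≫ (shAdd Z b (-a) (b - a) (by ring)).hom) ≫
          (shAdd Z b (-a) (b - a) (by ring)).inv := by simp
  _ = 0 := by rw [h1, zero_comp]

lemma LB.hom0 {X W : C} {n : ℤ} (h : T.LB X n) (hW : W ∈ T.le) (hn : 0 < n)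
    (φ : W ⟶ X) : φ = 0 := by
  have h1 := h W hW 0 (by omega) (φ ≫ (shZero X).inv)
  calc φ = (φ ≫ (shZero X).inv) ≫ (shZero X).hom := by simp
  _ = 0 := by rw [h1, zero_comp]

lemma LB.homL {X W : C} {n : ℤ} (h : T.LB X n) (hW : W ∈ T.le) {a : ℤ} (ha : -a < n)
    (φ : (W⟦a⟧ : C) ⟶ X) : φ = 0 := by
  rw [← unshiftSrc_eq_zero_iff]
  exact h W hW (-a) (by omega) _

lemma UB.of_iso {X X' : C} {n : ℤ} (e : X ≅ X') (h : T.UB X' n) : T.UB X n := by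
  intro Z hZ b hb φ
  have h1 := h Z hZ b hb (e.inv ≫ φ)
  rw [← Iso.hom_inv_id_assoc e φ, h1, comp_zero]

lemma LB.of_iso {X X' : C} {n : ℤ} (e : X ≅ X') (h : T.LB X' n) : T.LB X n := by
  intro W hW b hb φ
  have h1 := h W hW b hb (φ ≫ (shiftFunctor C b).map e.hom)
  have h2 : φ ≫ (shiftFunctor C b).map e.hom ≫ (shiftFunctor C b).map e.inv = φ := by
    rw [← Functor.map_comp, Iso.hom_inv_id, CategoryTheory.Functor.map_id, Category.comp_id]
  rw [← h2, ← Category.assoc, h1, zero_comp]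

lemma UB.shift {X : C} {n : ℤ} (h : T.UB X n) (s : ℤ) : T.UB ((X⟦s⟧ : C)) (n - s) :=
  fun Z hZ b hb φ => h.hom hZ (by omega) φ

lemma LB.shift {X : C} {n : ℤ} (h : T.LB X n) (s : ℤ) : T.LB ((X⟦s⟧ : C)) (n - s) := by
  intro W hW b hb φ
  have h1 := h W hW (s + b) (by omega) (φ ≫ (shAdd X s b (s + b) rfl).hom)
  calc φ = (φ ≫ (shAdd X s b (s + b) rfl).hom) ≫ (shAdd X s b (s + b) rfl).inv := by simp
  _ = 0 := by rw [h1, zero_comp]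

lemma UB.mono {X : C} {n m : ℤ} (h : T.UB X n) (hnm : n ≤ m) : T.UB X m :=
  fun Z hZ b hb φ => h Z hZ b (by omega) φ

lemma LB.mono {X : C} {n m : ℤ} (h : T.LB X n) (hmn : m ≤ n) : T.LB X m :=
  fun W hW b hb φ => h W hW b (by omega) φ

lemma UB_of_isZero {X : C} (hX : IsZero X) (n : ℤ) : T.UB X n :=
  fun _ _ _ _ φ => hX.eq_of_src φ 0

lemma LB_of_isZero {X : C} (hX : IsZero X) (n : ℤ) : T.LB X n :=
  fun _ _ b _ φ => (isZero_shift_of_isZero hX b).eq_of_tgt φ 0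

variable (T)

lemma le_shift_int {X : C} (hX : X ∈ T.le) {m : ℤ} (hm : 0 ≤ m) : (X⟦m⟧ : C) ∈ T.le := by
  obtain ⟨n, rfl⟩ := Int.eq_ofNat_of_zero_le hm
  clear hm
  induction n with
  | zero => exact T.le_iso (shZero X).symm hX
  | succ n ih =>
      exact T.le_iso (shAdd X (n : ℤ) 1 _ (by push_cast; ring)) (T.le_shift _ ih)

lemma ge_shift_int {X : C} (hX : X ∈ T.ge) {m : ℤ} (hm : m ≤ 0) : (X⟦m⟧ : C) ∈ T.ge := by
  obtain ⟨n, rfl⟩ := Int.exists_eq_neg_ofNat hm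
  clear hm
  induction n with
  | zero =>
      have h00 : (-((0:ℕ):ℤ)) = 0 := by simp
      rw [h00]
      exact T.ge_iso (shZero X).symm hX
  | succ n ih =>
      refine T.ge_iso (shAdd X (-(n:ℤ)) (-1) _ (by push_cast; ring)) (T.ge_shift _ ih)

lemma hom_zero_le_ge {W Z : C} (hW : W ∈ T.le) (hZ : Z ∈ T.ge) {a : ℤ} (ha : 1 ≤ a)
    (φ : (W⟦a⟧ : C) ⟶ Z) : φ = 0 := by
  have h1 : (shAdd W (a-1) 1 a (by ring)).hom ≫ φ = 0 :=
    T.hom_zero _ (T.le_shift_int hW (by omega)) Z hZ _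
  rw [← Iso.inv_hom_id_assoc (shAdd W (a-1) 1 a (by ring)) φ, h1, comp_zero]

lemma ub_of_le {X : C} (hX : X ∈ T.le) : T.UB X 0 := by
  intro Z hZ b hb φ
  rw [← unshiftTgt_eq_zero_iff]
  exact T.hom_zero_le_ge hX hZ (by omega) _

lemma lb_of_ge {X : C} (hX : X ∈ T.ge) : T.LB X 0 := by
  intro W hW b hb φ
  rw [← unshiftTgt_eq_zero_iff]
  exact T.hom_zero_le_ge hW hX (by omega) _

lemma ge_of_lb {X : C} (h : T.LB X 0) : X ∈ T.ge := by
  obtain ⟨A, B, hA, hB, f, g, h3, hTr⟩ := T.triangle X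
  have hf : f = 0 := h.homL hA (by norm_num) f
  obtain ⟨s, hs⟩ := Triangle.coyoneda_exact₁ _ hTr (𝟙 ((A⟦(1:ℤ)⟧ : C)⟦(1:ℤ)⟧))
    (by
      show 𝟙 _ ≫ (shiftFunctor C (1:ℤ)).map f = 0
      rw [hf, CategoryTheory.Functor.map_zero, comp_zero])
  have hs0 : s = 0 := T.hom_zero _ (T.le_shift _ hA) _ hB s
  have hzero : IsZero ((A⟦(1:ℤ)⟧ : C)) := by
    rw [IsZero.iff_id_eq_zero, ← shift_map_eq_zero_iff (1:ℤ), CategoryTheory.Functor.map_id]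
    rw [show 𝟙 ((A⟦(1:ℤ)⟧ : C)⟦(1:ℤ)⟧) = s ≫ (Triangle.mk f g h3).mor₃ from hs, hs0, zero_comp]; rfl
  have hiso : IsIso (Triangle.mk f g h3).mor₂ := (Triangle.isZero₁_iff_isIso₂ _ hTr).1 hzero
  exact T.ge_iso (asIso (Triangle.mk f g h3).mor₂).symm hB

lemma le_of_ub {X : C} (h : T.UB X 0) : X ∈ T.le := by
  obtain ⟨A, B, hA, hB, f, g, h3, hTr⟩ := T.triangle ((X⟦(1:ℤ)⟧ : C))
  have hg : g = 0 := h.homL hB (by norm_num) g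
  obtain ⟨ψ, hψ⟩ := Triangle.yoneda_exact₃ _ hTr (𝟙 B)
    (by
      show g ≫ 𝟙 B = 0
      rw [hg, zero_comp])
  have hψ0 : ψ = 0 := T.hom_zero _ (T.le_shift _ hA) _ hB ψ
  have hzero : IsZero B := by rw [IsZero.iff_id_eq_zero, hψ, hψ0, comp_zero]; rfl
  have hiso : IsIso (Triangle.mk f g h3).mor₁ := (Triangle.isZero₃_iff_isIso₁ _ hTr).1 hzero
  refine T.le_iso ?_ hA
  exact (shCancel A 1).symm ≪≫
    (shiftFunctor C (-1:ℤ)).mapIso (@asIso _ _ _ _ (Triangle.mk f g h3).mor₁ hiso) ≪≫ shCancel X 1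

lemma ub_iff {X : C} (n : ℤ) : T.UB X n ↔ (X⟦n⟧ : C) ∈ T.le := by
  constructor
  · intro h
    have h2 := h.shift n
    rw [sub_self] at h2
    exact T.le_of_ub h2
  · intro h
    have h2 := (T.ub_of_le h).shift (-n)
    have h3 : (0:ℤ) - -n = n := by ring
    rw [h3] at h2
    exact UB.of_iso (shCancel X n).symm h2

lemma lb_iff {X : C} (n : ℤ) : T.LB X n ↔ (X⟦n⟧ : C) ∈ T.ge := by
  constructor
  · intro h
    have h2 := h.shift n
    rw [sub_self] at h2
    exact T.ge_of_lb h2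
  · intro h
    have h2 := (T.lb_of_ge h).shift (-n)
    have h3 : (0:ℤ) - -n = n := by ring
    rw [h3] at h2
    exact LB.of_iso (shCancel X n).symm h2

variable {T}

/-- closure of `UB` under extensions (middle object). -/
lemma UB.ext₂ {T' : Triangle C} (hT' : T' ∈ distTriang C) {n : ℤ}
    (h₁ : T.UB T'.obj₁ n) (h₃ : T.UB T'.obj₃ n) : T.UB T'.obj₂ n := by
  intro Z hZ b hb φ
  obtain ⟨ψ, hψ⟩ := Triangle.yoneda_exact₂ _ hT' φ (h₁ Z hZ b hb _)
  rw [hψ, h₃ Z hZ b hb ψ, comp_zero]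

lemma UB.ext₃ {T' : Triangle C} (hT' : T' ∈ distTriang C) {n : ℤ}
    (h₂ : T.UB T'.obj₂ n) (h₁ : T.UB T'.obj₁ (n+1)) : T.UB T'.obj₃ n := by
  have h1' := h₁.shift 1
  rw [show n + 1 - 1 = n by ring] at h1'
  exact UB.ext₂ (rot_of_distTriang _ hT') h₂ h1'

lemma LB.ext₂ {T' : Triangle C} (hT' : T' ∈ distTriang C) {n : ℤ}
    (h₁ : T.LB T'.obj₁ n) (h₃ : T.LB T'.obj₃ n) : T.LB T'.obj₂ n := by
  intro W hW b hb φ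
  rw [← unshiftTgt_eq_zero_iff]
  have h2 : unshiftTgt b φ ≫ T'.mor₂ = 0 := h₃.homL hW (by omega) _
  obtain ⟨χ, hχ⟩ := Triangle.coyoneda_exact₂ _ hT' (unshiftTgt b φ) h2
  rw [hχ, h₁.homL hW (by omega) χ, zero_comp]

lemma LB.ext₁ {T' : Triangle C} (hT' : T' ∈ distTriang C) {n : ℤ}
    (h₂ : T.LB T'.obj₂ n) (h₃ : T.LB T'.obj₃ (n-1)) : T.LB T'.obj₁ n := by
  have h3' := h₃.shift (-1)
  rw [show n - 1 - -1 = n by ring] at h3'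
  exact LB.ext₂ (inv_rot_of_distTriang _ hT') h3' h₂

end TStructure

/-- Truncation triangle `τ^{≤0} Y ⟶ Y ⟶ τ^{≥1} Y`. -/
lemma trunc (T : TStructure C) (Y : C) :
    ∃ (A R : C) (f : A ⟶ Y) (g : Y ⟶ R) (h3 : R ⟶ (A⟦(1:ℤ)⟧ : C)),
      (Triangle.mk f g h3 ∈ distTriang C) ∧ A ∈ T.le ∧ T.LB R 1 := by
  obtain ⟨A, B, hA, hB, f₁, g₁, h₁, hTr⟩ := T.triangle ((Y⟦(1:ℤ)⟧ : C))
  have h3d := inv_rot_of_distTriang _ (inv_rot_of_distTriang _ (inv_rot_of_distTriang _ hTr))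
  refine ⟨A, (B⟦(-1:ℤ)⟧ : C), _, _, _,
    reshape h3d ((shCancel A 1).symm) ((shCancel Y 1).symm) (Iso.refl _), hA, ?_⟩
  have h2 := (T.lb_of_ge hB).shift (-1)
  rw [show (0:ℤ) - -1 = 1 by ring] at h2
  exact h2

end ToolsD
section ToolsE
open ZeroObject

variable {C : Type u} [Category.{v} C] [HasZeroObject C] [HasShift C ℤ]
  [Preadditive C] [∀ n : ℤ, (shiftFunctor C n).Additive] [Pretriangulated C]
  {T : TStructure C}

lemma UB_addClos {A : Set C} {n : ℤ} (hA : ∀ X ∈ A, T.UB X n) {X : C}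
    (h : addClos C A X) : T.UB X n := by
  intro Z hZ b hb φ
  exact vanish_out_addClos (fun X' h' φ' => hA X' h' Z hZ b hb φ') h φ

lemma UB_coprodN {A : Set C} {n : ℤ} (hA : ∀ X ∈ A, T.UB X n) (m : ℕ) (X : C)
    (h : X ∈ coprodN C A m) : T.UB X n := by
  intro Z hZ b hb φ
  exact vanish_out_coprodN (fun X' h' φ' => hA X' h' Z hZ b hb φ') m X h φ

lemma LB_addClos {A : Set C} {n : ℤ} (hA : ∀ X ∈ A, T.LB X n) {X : C}
    (h : addClos C A X) : T.LB X n := by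
  induction h with
  | of e hY => exact TStructure.LB.of_iso e (hA _ hY)
  | zero hX => exact TStructure.LB_of_isZero hX n
  | dirSum hX hY hsum ihX ihY =>
      intro W hW b hb φ
      obtain ⟨i₁, i₂, p₁, p₂, m₁, m₂, m₃, m₄, m₅⟩ := hsum.shift b
      rw [← Category.comp_id φ, ← m₅, Preadditive.comp_add, ← Category.assoc, ← Category.assoc]
      simp [ihX W hW b hb (φ ≫ p₁), ihY W hW b hb (φ ≫ p₂)]

lemma LB_coprodN {A : Set C} {n : ℤ} (hA : ∀ X ∈ A, T.LB X n) :
    ∀ (m : ℕ) (X : C), X ∈ coprodN C A m → T.LB X n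
  | 0, X, h => TStructure.LB_of_isZero h n
  | 1, X, h => LB_addClos hA h
  | (m+2), X, h => by
      obtain ⟨U, V, f, g, h3, hU, hV, hT⟩ := h
      exact TStructure.LB.ext₂ (T' := Triangle.mk f g h3) hT (LB_addClos hA hU)
        (LB_coprodN hA (m+1) V hV)

lemma LB_of_summand {Z X W' : C} {n : ℤ} (h : T.LB Z n) (hsum : IsDirSum Z X W') :
    T.LB X n := by
  intro W hW b hb φ
  obtain ⟨i₁, i₂, p₁, p₂, m₁, -, -, -, -⟩ := hsum.shift b
  have h1 : φ ≫ i₁ = 0 := h W hW b hb (φ ≫ i₁)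
  have h2 : φ ≫ i₁ ≫ p₁ = φ := by rw [m₁, Category.comp_id]
  rw [← h2, ← Category.assoc, h1, zero_comp]

lemma UB_of_summand {Z X W' : C} {n : ℤ} (h : T.UB Z n) (hsum : IsDirSum Z X W') :
    T.UB X n := by
  intro Z' hZ' b hb φ
  obtain ⟨i₁, i₂, p₁, p₂, m₁, -, -, -, -⟩ := hsum
  have h1 : p₁ ≫ φ = 0 := h Z' hZ' b hb (p₁ ≫ φ)
  rw [← Category.id_comp φ, ← m₁, Category.assoc, h1, comp_zero]

lemma LB_genN {G : C} {I : Set ℤ} {n : ℤ} (hmem : ∀ i ∈ I, T.LB ((G⟦(-i:ℤ)⟧ : C)) n)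
    {m : ℕ} {X : C} (h : X ∈ genN C G I m) : T.LB X n := by
  obtain ⟨Z, W', hZ, hsum⟩ := h
  refine LB_of_summand (LB_coprodN ?_ m Z hZ) hsum
  rintro X' ⟨i, hi, ⟨e⟩⟩
  exact TStructure.LB.of_iso e (hmem i hi)

/-- Generation certificate from length certificate over the simple objects. -/
lemma cert_mem_gen {k : ℕ} {S : Fin k → C} {G : C} (hG : IsFiniteDirSum G S) {I : Set ℤ}
    (h0 : (0:ℤ) ∈ I) : ∀ (m : ℕ) (X : C),
    X ∈ coprodN C {Y | ∃ i, Y = S i} (m+1) → X ∈ gen C G I := by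
  intro m
  induction m with
  | zero =>
      intro X hX
      obtain ⟨X', Z, hZ, hsum⟩ := compl_in_addClos h0 hG hX
      exact ⟨0, Z, X', hZ, hsum⟩
  | succ m ih =>
      intro X hX
      obtain ⟨A₁, A₂, u, q, δ, hA₁, hA₂, hT⟩ := hX
      exact absorb h0 hG hT hA₁ (ih A₂ hA₂)

/-- The core inductive step ("peeling off one simple layer at a time"). -/
lemma K_lemma (T : TStructure C) {k : ℕ} {S : Fin k → C}
    (hSheart : ∀ i, S i ∈ T.le ∩ T.ge) {G : C} (hG : IsFiniteDirSum G S)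
    (n : ℤ) (hn : 0 ≤ n)
    (hOut : ∀ B : C, T.LB B 0 → T.UB B n → B ∈ gen C G (Set.Icc 0 n)) :
    ∀ (m : ℕ) (Y A R : C) (f : A ⟶ Y) (g : Y ⟶ R) (h3 : R ⟶ (A⟦(1:ℤ)⟧ : C)),
      (Triangle.mk f g h3 ∈ distTriang C) →
      A ∈ coprodN C {Z | ∃ i, Z = S i} (m+1) →
      T.UB Y (n+1) → T.LB R 1 → R ∈ gen C G (Set.Icc 0 (n+1)) →
      Y ∈ gen C G (Set.Icc 0 (n+1)) := by
  have hSUB : ∀ X ∈ {Z | ∃ i, Z = S i}, T.UB X 0 := by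
    rintro X ⟨i, rfl⟩; exact T.ub_of_le (hSheart i).1
  have h0mem : (0:ℤ) ∈ Set.Icc (0:ℤ) (n+1) := ⟨le_refl _, by omega⟩
  intro m
  induction m with
  | zero =>
      intro Y A R f g h3 hTr hA hUBY hLBR hRgen
      exact absorb h0mem hG hTr hA hRgen
  | succ m ih =>
      intro Y A R f g h3 hTr hA hUBY hLBR hRgen
      obtain ⟨A₁, A₂, u, q, δA, hA₁, hA₂, hTA⟩ := hA
      obtain ⟨Y₁, g₁, δY, hTY₁⟩ := distinguished_cocone_triangle (u ≫ f)
      obtain ⟨e, he₂, he₃⟩ := complete_distinguished_triangle_morphism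
        (Triangle.mk u q δA) (Triangle.mk (u ≫ f) g₁ δY) hTA hTY₁ (𝟙 A₁) f (by simp [Triangle.mk])
      dsimp [Triangle.mk] at e he₂ he₃
      have he₃' : δA = e ≫ δY := by
        rw [← he₃, CategoryTheory.Functor.map_id, Category.comp_id]
      have hA₂le : A₂ ∈ T.le := T.le_of_ub (UB_coprodN hSUB (m+1) A₂ hA₂)
      have hA₁le : A₁ ∈ T.le := T.le_of_ub (UB_addClos hSUB hA₁)
      -- C1: Hom(W, A₂) ≅ Hom(W, Y₁) via e, for W ∈ le
      have C1inj : ∀ W, W ∈ T.le → ∀ φ : W ⟶ A₂, φ ≫ e = 0 → φ = 0 := by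
        intro W hW φ hφ0
        have h1 : φ ≫ δA = 0 := by rw [he₃', ← Category.assoc, hφ0, zero_comp]
        obtain ⟨ψ, hψ⟩ := Triangle.coyoneda_exact₃ _ hTA φ h1
        dsimp [Triangle.mk] at ψ hψ
        have h2 : (ψ ≫ f) ≫ g₁ = 0 := by
          calc (ψ ≫ f) ≫ g₁ = ψ ≫ (q ≫ e) := by rw [Category.assoc, ← he₂]
          _ = φ ≫ e := by rw [← Category.assoc, ← hψ]
          _ = 0 := hφ0
        obtain ⟨χ, hχ⟩ := Triangle.coyoneda_exact₂ _ hTY₁ (ψ ≫ f) h2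
        dsimp [Triangle.mk] at χ hχ
        have h3'' : (ψ - χ ≫ u) ≫ f = 0 := by
          rw [Preadditive.sub_comp, Category.assoc, ← hχ, sub_self]
        obtain ⟨ω, hω⟩ := Triangle.coyoneda_exact₂ _ (inv_rot_of_distTriang _ hTr)
          (ψ - χ ≫ u) h3''
        have hω0 : ω = 0 := hLBR W hW (-1) (by norm_num) ω
        have hψ0 : ψ = χ ≫ u := by
          have h4 := hω
          rw [hω0, zero_comp] at h4
          exact sub_eq_zero.mp h4
        have z12 := comp_distTriang_mor_zero₁₂ _ hTA
        dsimp [Triangle.mk] at z12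
        rw [hψ, hψ0, Category.assoc, z12]; exact comp_zero
      have C1surj : ∀ W, W ∈ T.le → ∀ θ : W ⟶ Y₁, ∃ φ : W ⟶ A₂, φ ≫ e = θ := by
        intro W hW θ
        have h5 : ((θ ≫ δY) ≫ (shiftFunctor C (1:ℤ)).map u) ≫ (shiftFunctor C (1:ℤ)).map f
            = 0 := by
          have z := comp_distTriang_mor_zero₃₁ _ hTY₁
          dsimp [Triangle.mk] at z
          rw [Category.assoc, Category.assoc, ← Functor.map_comp, z]; exact comp_zero
        obtain ⟨ψ₅, hψ₅⟩ := Triangle.coyoneda_exact₁ _ hTr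
          ((θ ≫ δY) ≫ (shiftFunctor C (1:ℤ)).map u) h5
        have hψ₅0 : ψ₅ = 0 := hLBR.hom0 hW one_pos ψ₅
        have hf' : (θ ≫ δY) ≫ (shiftFunctor C (1:ℤ)).map u = 0 := by
          erw [hψ₅, hψ₅0, zero_comp]; rfl
        obtain ⟨ρ, hρ⟩ := Triangle.coyoneda_exact₁ _ hTA (θ ≫ δY) hf'
        dsimp [Triangle.mk] at ρ hρ
        have h6 : (θ - ρ ≫ e) ≫ δY = 0 := by
          rw [Preadditive.sub_comp, Category.assoc, ← he₃', ← hρ, sub_self]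
        obtain ⟨σ, hσ⟩ := Triangle.coyoneda_exact₃ _ hTY₁ (θ - ρ ≫ e) h6
        dsimp [Triangle.mk] at σ hσ
        have h7 : σ ≫ g = 0 := hLBR.hom0 hW one_pos _
        obtain ⟨τ, hτ⟩ := Triangle.coyoneda_exact₂ _ hTr σ h7
        dsimp [Triangle.mk] at τ hτ
        refine ⟨ρ + τ ≫ q, ?_⟩
        have : (τ ≫ q) ≫ e = σ ≫ g₁ := by
          rw [Category.assoc, he₂, ← Category.assoc, ← hτ]
        rw [Preadditive.add_comp, this, ← hσ]
        abel
      -- fresh truncation of Y₁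
      obtain ⟨A', R', t, g', h3', hT', hA'le, hLBR'⟩ := trunc T Y₁
      have hUBY₁ : T.UB Y₁ (n+1) :=
        TStructure.UB.ext₃ (T' := Triangle.mk (u ≫ f) g₁ δY) hTY₁ hUBY
          ((T.ub_of_le hA₁le).mono (by omega))
      have hUBR' : T.UB R' (n+1) :=
        TStructure.UB.ext₃ (T' := Triangle.mk t g' h3') hT' hUBY₁
          ((T.ub_of_le hA'le).mono (by omega))
      have hR'gen : R' ∈ gen C G (Set.Icc 0 (n+1)) := by
        have hLB1 : T.LB ((R'⟦(1:ℤ)⟧ : C)) 0 := by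
          have h8 := hLBR'.shift 1; rwa [sub_self] at h8
        have hUB1 : T.UB ((R'⟦(1:ℤ)⟧ : C)) n := by
          have h8 := hUBR'.shift 1
          rwa [show n + 1 - 1 = n by ring] at h8
        have hmem := hOut _ hLB1 hUB1
        have h9 := gen_shift (-1) (I := Set.Icc 0 n) (I' := Set.Icc 0 (n+1))
          (fun i hi => by
            simp only [Set.mem_Icc] at hi ⊢
            omega) hmem
        exact gen_iso (shCancel R' 1).symm h9
      -- lift e through the truncation
      have hC2 : e ≫ g' = 0 := hLBR'.hom0 hA₂le one_pos _
      obtain ⟨eb, heb⟩ := Triangle.coyoneda_exact₂ _ hT' e hC2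
      dsimp [Triangle.mk] at eb heb
      have C3inj : ∀ W, W ∈ T.le → ∀ φ : W ⟶ A', φ ≫ t = 0 → φ = 0 := by
        intro W hW φ h0
        obtain ⟨ω, hω⟩ := Triangle.coyoneda_exact₂ _ (inv_rot_of_distTriang _ hT') φ h0
        have hω0 : ω = 0 := hLBR' W hW (-1) (by norm_num) ω
        rw [hω, hω0, zero_comp]; rfl
      obtain ⟨s, hs⟩ : ∃ s : A' ⟶ A₂, s ≫ eb = 𝟙 A' := by
        obtain ⟨φ, hφ⟩ := C1surj A' hA'le t
        refine ⟨φ, ?_⟩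
        have h1 : (φ ≫ eb - 𝟙 A') ≫ t = 0 := by
          rw [Preadditive.sub_comp, Category.assoc, ← heb, hφ, Category.id_comp, sub_self]
        have h2 := C3inj A' hA'le _ h1
        rwa [sub_eq_zero] at h2
      have hs2 : eb ≫ s = 𝟙 A₂ := by
        have h1 : (eb ≫ s - 𝟙 A₂) ≫ e = 0 := by
          rw [heb, Preadditive.sub_comp, Category.assoc, ← Category.assoc s, hs,
            Category.id_comp, Category.id_comp, sub_self]
        have h2 := C1inj A₂ hA₂le _ h1
        rwa [sub_eq_zero] at h2
      have hA' : A' ∈ coprodN C {Z | ∃ i, Z = S i} (m+1) :=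
        coprodN_iso (Iso.mk eb s hs2 hs).symm hA₂
      have hY₁ : Y₁ ∈ gen C G (Set.Icc 0 (n+1)) :=
        ih Y₁ A' R' t g' h3' hT' hA' hUBY₁ hLBR' hR'gen
      exact absorb h0mem hG hTY₁ hA₁ hY₁

end ToolsE
section ToolsF
open ZeroObject

variable {C : Type u} [Category.{v} C] [HasZeroObject C] [HasShift C ℤ]
  [Preadditive C] [∀ n : ℤ, (shiftFunctor C n).Additive] [Pretriangulated C]

lemma UB_of_finDirSum {T : TStructure C} {k : ℕ} {S : Fin k → C} {G : C}
    (hG : IsFiniteDirSum G S) {n : ℤ} (h : ∀ i, T.UB (S i) n) : T.UB G n := by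
  intro Z hZ b hb φ
  obtain ⟨ι, π, hιπ, hne, htot⟩ := hG
  rw [← Category.id_comp φ, ← htot, Preadditive.sum_comp]
  refine Finset.sum_eq_zero (fun i _ => ?_)
  rw [Category.assoc, h i Z hZ b hb (ι i ≫ φ), comp_zero]

lemma LB_of_finDirSum {T : TStructure C} {k : ℕ} {S : Fin k → C} {G : C}
    (hG : IsFiniteDirSum G S) {n : ℤ} (h : ∀ i, T.LB (S i) n) : T.LB G n := by
  intro W hW b hb φ
  obtain ⟨ι, π, hιπ, hne, htot⟩ := hG
  have htot' : (∑ i, (shiftFunctor C b).map (π i) ≫ (shiftFunctor C b).map (ι i))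
      = 𝟙 ((G⟦b⟧ : C)) := by
    have := congrArg (fun ξ => (shiftFunctor C b).map ξ) htot
    simp only [CategoryTheory.Functor.map_id] at this
    rw [← this, Functor.map_sum]
    exact Finset.sum_congr rfl (fun i _ => by rw [Functor.map_comp])
  rw [← Category.comp_id φ, ← htot', Preadditive.comp_sum]
  refine Finset.sum_eq_zero (fun i _ => ?_)
  rw [← Category.assoc, h i W hW b hb (φ ≫ (shiftFunctor C b).map (π i)), zero_comp]

/-- **Master lemma**: every bounded object of `𝒮^{≥0} ∩ 𝒮^{≤n}` lies in `⟨G⟩^{[0,n]}`. -/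
lemma master (T : TStructure C) {k : ℕ} {S : Fin k → C}
    (hSheart : ∀ i, S i ∈ T.le ∩ T.ge)
    (hlength : ∀ X ∈ T.le ∩ T.ge, ∃ m : ℕ, X ∈ coprodN C {Y | ∃ i, Y = S i} (m+1))
    {G : C} (hG : IsFiniteDirSum G S) :
    ∀ (n : ℕ) (Y : C), T.LB Y 0 → T.UB Y (n : ℤ) → Y ∈ gen C G (Set.Icc 0 (n : ℤ)) := by
  intro n
  induction n with
  | zero =>
      intro Y hLB hUB
      have hUB' : T.UB Y 0 := by exact_mod_cast hUB
      obtain ⟨m, hm⟩ := hlength Y ⟨T.le_of_ub hUB', T.ge_of_lb hLB⟩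
      exact cert_mem_gen hG (by simp) m Y hm
  | succ n ih =>
      intro Y hLB hUB
      have hUBY : T.UB Y ((n:ℤ)+1) := by
        rwa [show ((n+1:ℕ):ℤ) = (n:ℤ)+1 by push_cast; ring] at hUB
      obtain ⟨A, R, f, g, h3, hTr, hAle, hLBR⟩ := trunc T Y
      have hAlb : T.LB A 0 :=
        TStructure.LB.ext₁ (T' := Triangle.mk f g h3) hTr hLB (hLBR.mono (by omega))
      obtain ⟨m, hm⟩ := hlength A ⟨hAle, T.ge_of_lb hAlb⟩
      have hUBR : T.UB R ((n:ℤ)+1) :=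
        TStructure.UB.ext₃ (T' := Triangle.mk f g h3) hTr hUBY
          ((T.ub_of_le hAle).mono (by omega))
      have hRgen : R ∈ gen C G (Set.Icc 0 ((n:ℤ)+1)) := by
        have hLB1 : T.LB ((R⟦(1:ℤ)⟧ : C)) 0 := by
          have h8 := hLBR.shift 1; rwa [sub_self] at h8
        have hUB1 : T.UB ((R⟦(1:ℤ)⟧ : C)) (n:ℤ) := by
          have h8 := hUBR.shift 1; rwa [show (n:ℤ)+1-1 = (n:ℤ) by ring] at h8
        have hmem := ih _ hLB1 hUB1
        have h9 := gen_shift (-1) (I := Set.Icc 0 (n:ℤ)) (I' := Set.Icc 0 ((n:ℤ)+1))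
          (fun i hi => by simp only [Set.mem_Icc] at hi ⊢; omega) hmem
        exact gen_iso (shCancel R 1).symm h9
      have hfin := K_lemma T hSheart hG (n:ℤ) (by positivity) ih m Y A R f g h3 hTr hm
        hUBY hLBR hRgen
      rwa [show ((n+1:ℕ):ℤ) = (n:ℤ)+1 by push_cast; ring]

end ToolsF
/-- Let `(𝒮^{≤0}, 𝒮^{≥0})` be a bounded t-structure whose heart is
algebraic, with "simple" objects `S 1, …, S k`, and let `G := S 1 ⊕ ⋯ ⊕ S k`.  Then `G` is
a classical generator of `𝒮` and `fd(𝒮, G) = 0`; in fact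
`G(-∞,-1]^⊥ = ⟨G⟩^{[0,∞)} = 𝒮^{≥0}`. -/
theorem fd_zero_of_algebraic_tstructure
    (C : Type u) [Category.{v} C] [HasZeroObject C] [HasShift C ℤ]
    [Preadditive C] [∀ n : ℤ, (shiftFunctor C n).Additive] [Pretriangulated C]
    (T : TStructure C) (hT : T.Bounded) (k : ℕ) (S : Fin k → C)
    (hSheart : ∀ i, S i ∈ T.le ∩ T.ge)
    (hlength : ∀ X ∈ T.le ∩ T.ge, ∃ m : ℕ, X ∈ coprodN C {Y | ∃ i, Y = S i} (m+1))
    (G : C) (hG : IsFiniteDirSum G S) :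
    (∀ X : C, X ∈ gen C G Set.univ) ∧
    rPerpShifts C G (Set.Iic (-1)) = gen C G (Set.Ici 0) ∧
    gen C G (Set.Ici 0) = T.ge ∧
    fdLE C G 0 := by
  have hGub : T.UB G 0 := UB_of_finDirSum hG (fun i => T.ub_of_le (hSheart i).1)
  have hGlb : T.LB G 0 := LB_of_finDirSum hG (fun i => T.lb_of_ge (hSheart i).2)
  have hGge : G ∈ T.ge := T.ge_of_lb hGlb
  have hGle : G ∈ T.le := T.le_of_ub hGub
  have hge_gen : ∀ Y ∈ T.ge, Y ∈ gen C G (Set.Ici 0) := by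
    intro Y hY
    obtain ⟨na, hna⟩ := hT.1 Y
    have hUB : T.UB Y (na:ℤ) := (T.ub_iff _).2 hna
    have h1 := master T hSheart hlength hG na Y (T.lb_of_ge hY) hUB
    exact gen_mono_I (fun i hi => hi.1) h1
  have hgen_ge : ∀ X ∈ gen C G (Set.Ici 0), X ∈ T.ge := by
    rintro X ⟨n, hn⟩
    refine T.ge_of_lb (LB_genN (T := T) ?_ hn)
    intro i hi
    have h2 := hGlb.shift (-i)
    rw [show (0:ℤ) - -i = i by ring] at h2
    exact h2.mono (Set.mem_Ici.mp hi)
  have hle_gen : ∀ (W : C), W ∈ T.le → ∃ nb : ℕ, W ∈ gen C G (Set.Icc (-(nb:ℤ)) 0) := by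
    intro W hW
    obtain ⟨nb, hnb⟩ := hT.2 W
    have hLB : T.LB ((W⟦-(nb:ℤ)⟧ : C)) 0 := T.lb_of_ge hnb
    have hUB : T.UB ((W⟦-(nb:ℤ)⟧ : C)) (nb:ℤ) := by
      have h3 := (T.ub_of_le hW).shift (-(nb:ℤ))
      rwa [show (0:ℤ) - -(nb:ℤ) = (nb:ℤ) by ring] at h3
    have h1 := master T hSheart hlength hG nb _ hLB hUB
    have h2 := gen_shift ((nb:ℤ)) (I := Set.Icc 0 (nb:ℤ)) (I' := Set.Icc (-(nb:ℤ)) 0)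
      (fun i hi => by simp only [Set.mem_Icc] at hi ⊢; omega) h1
    refine ⟨nb, gen_iso ?_ h2⟩
    exact ((shiftFunctorCompIsoId C (-(nb:ℤ)) (nb:ℤ) (by ring)).app W).symm
  have hperp_ge : ∀ Y ∈ rPerpShifts C G (Set.Iic (-1)), Y ∈ T.ge := by
    intro Y hY
    refine T.ge_of_lb ?_
    intro W hW b hb φ
    rw [← unshiftTgt_eq_zero_iff]
    obtain ⟨nb, hWgen⟩ := hle_gen W hW
    have h2 := gen_shift (-b) (I := Set.Icc (-(nb:ℤ)) 0) (I' := Set.Iic (-1))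
      (fun i hi => by simp only [Set.mem_Icc, Set.mem_Iic] at hi ⊢; omega) hWgen
    obtain ⟨n2, hg⟩ := h2
    exact vanish_out_genN (fun i hi φ' => hY i hi φ') hg (unshiftTgt b φ)
  refine ⟨?_, ?_, ?_, ?_⟩
  · intro X
    obtain ⟨nb, hnb⟩ := hT.2 X
    have hX' := hge_gen _ hnb
    have h2 := gen_shift ((nb:ℤ)) (I := Set.Ici 0) (I' := Set.univ)
      (fun i _ => trivial) hX'
    exact gen_iso ((shiftFunctorCompIsoId C (-(nb:ℤ)) (nb:ℤ) (by ring)).app X).symm h2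
  · ext Y
    constructor
    · intro hY; exact hge_gen _ (hperp_ge Y hY)
    · intro hY i hi f
      have hYge := hgen_ge Y hY
      exact (T.lb_of_ge hYge).homL hGle
        (show -(-i) < 0 by have := Set.mem_Iic.mp hi; omega) f
  · ext Y
    constructor
    · intro hY; exact hgen_ge Y hY
    · intro hY; exact hge_gen Y hY
  · intro X hX
    have h4 : X ∈ gen C G (Set.Ici 0) := hge_gen _ (hperp_ge X hX)
    have h00 : Set.Ici (-(0:ℤ)) = Set.Ici 0 := by norm_num
    rw [h00]
    exact h4

end Paper
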